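/- Let 1 < p ≤ q < ∞, let ω be a weight on the upper half-plane 𝓗 belonging to the Békollé–Bonami class B_p, and let μ be a positive Borel measure on 𝓗 such that there is C₀ > 0 with μ(Q_I) ≤ C₀ (ω(Q_I))^{q/p} for every bounded interval I ⊂ ℝ. Then there is a constant C > 0 such that for every f ∈ L^p_ω(𝓗), (∫_𝓗 (M_{d,ω} f(z))^q dμ(z))^{1/q} ≤ C ‖f‖_{p,ω}. -/

import Mathlib

open MeasureTheory Set
open scoped ENNReal NNReal

noncomputable section

/-- The upper half-plane `𝓗`. -/
def UHP : Set ℂ := {z : ℂ | 0 < z.im}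

/-- The Carleson box `Q_I` over the bounded interval `I = [a, b)`. -/
def Box (a b : ℝ) : Set ℂ := {z : ℂ | z.re ∈ Set.Ico a b ∧ z.im ∈ Set.Ioo 0 (b - a)}

/-- The `ω`-mass of a set, `ω(S) = ∫_S ω dV`. -/
def wMass (ω : ℂ → ℝ≥0∞) (S : Set ℂ) : ℝ≥0∞ := ∫⁻ z in S, ω z

/-- The Carleson box over the standard dyadic interval `[m·2^j, (m+1)·2^j)`. -/
def dBox (j m : ℤ) : Set ℂ := Box ((2 : ℝ) ^ j * (m : ℝ)) ((2 : ℝ) ^ j * ((m : ℝ) + 1))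

/-- The dyadic weighted maximal function `M_{d,ω} f` (standard dyadic grid). -/
def maxDW (ω : ℂ → ℝ≥0∞) (f : ℂ → ℂ) (z : ℂ) : ℝ≥0∞ :=
  ⨆ (j : ℤ) (m : ℤ) (_ : z ∈ dBox j m),
    (wMass ω (dBox j m))⁻¹ * ∫⁻ w in dBox j m, (‖f w‖₊ : ℝ≥0∞) * ω w

/-- The Békollé–Bonami constant `[ω]_{B_p}`. -/
def BBconst (ω : ℂ → ℝ≥0∞) (p : ℝ) : ℝ≥0∞ :=
  ⨆ (a : ℝ) (b : ℝ) (_ : a < b),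
    ((volume (Box a b))⁻¹ * wMass ω (Box a b)) *
      ((volume (Box a b))⁻¹ * ∫⁻ z in Box a b, ω z ^ (1 - p / (p - 1))) ^ (p - 1)

lemma Box_subset {a b a' b' : ℝ} (h1 : a' ≤ a) (h2 : b ≤ b') (h3 : b - a ≤ b' - a') :
    Box a b ⊆ Box a' b' := by
  rintro z ⟨⟨hr1, hr2⟩, ⟨hi1, hi2⟩⟩
  exact ⟨⟨le_trans h1 hr1, lt_of_lt_of_le hr2 h2⟩, ⟨hi1, lt_of_lt_of_le hi2 h3⟩⟩

lemma measurableSet_Box (a b : ℝ) : MeasurableSet (Box a b) := by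
  have : Box a b = Complex.re ⁻¹' (Set.Ico a b) ∩ Complex.im ⁻¹' (Set.Ioo 0 (b - a)) := by
    ext z; exact ⟨fun h => ⟨h.1, h.2⟩, fun h => ⟨h.1, h.2⟩⟩
  rw [this]
  exact (Complex.measurable_re measurableSet_Ico).inter (Complex.measurable_im measurableSet_Ioo)

lemma measurableSet_dBox (j m : ℤ) : MeasurableSet (dBox j m) := measurableSet_Box _ _

/-- containment in the ancestor box -/
lemma dBox_subset_anc (j m : ℤ) (d : ℕ) : dBox j m ⊆ dBox (j + d) (m / 2 ^ d) := by
  set k : ℤ := m / 2 ^ d with hk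
  have h2d : (0:ℤ) < 2 ^ d := by positivity
  have hle : 2 ^ d * k ≤ m := Int.mul_ediv_add_emod m (2 ^ d) ▸ le_add_of_nonneg_right (Int.emod_nonneg m (by positivity))
  have hlt : m < 2 ^ d * (k + 1) := by
    have h1 := Int.emod_lt_of_pos m h2d
    have h := Int.mul_ediv_add_emod m (2 ^ d)
    rw [← hk] at h
    have : 2 ^ d * (k + 1) = 2 ^ d * k + 2 ^ d := by ring
    omega
  -- real inequalities
  have e1 : (2:ℝ) ^ (j + (d:ℤ)) * (k:ℝ) ≤ (2:ℝ) ^ j * (m:ℝ) := by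
    have : (2:ℝ) ^ (j + (d:ℤ)) * (k:ℝ) = (2:ℝ) ^ j * (((2:ℤ)^d * k : ℤ) : ℝ) := by
      push_cast
      rw [zpow_add₀ (by norm_num : (2:ℝ) ≠ 0)]
      ring_nf
      rw [zpow_natCast]
      ring
    rw [this]
    have : ((2 ^ d * k : ℤ) : ℝ) ≤ (m:ℝ) := by exact_mod_cast hle
    nlinarith [zpow_pos (by norm_num : (0:ℝ) < 2) j]
  have e2 : (2:ℝ) ^ j * ((m:ℝ) + 1) ≤ (2:ℝ) ^ (j + (d:ℤ)) * ((k:ℝ) + 1) := by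
    have hm1 : (m:ℝ) + 1 ≤ ((2 ^ d * (k+1) : ℤ) : ℝ) := by exact_mod_cast hlt
    have : (2:ℝ) ^ (j + (d:ℤ)) * ((k:ℝ) + 1) = (2:ℝ) ^ j * (((2:ℤ)^d * (k+1) : ℤ) : ℝ) := by
      push_cast
      rw [zpow_add₀ (by norm_num : (2:ℝ) ≠ 0)]
      ring_nf
      rw [zpow_natCast]
      ring
    rw [this]
    nlinarith [zpow_pos (by norm_num : (0:ℝ) < 2) j]
  refine Box_subset e1 e2 ?_
  have : (2:ℝ)^j * ((m:ℝ)+1) - 2^j * m = 2^j := by ring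
  rw [this]
  have : (2:ℝ)^(j + (d:ℤ)) * ((k:ℝ)+1) - 2^(j+(d:ℤ)) * k = 2^(j+(d:ℤ)) := by ring
  rw [this]
  exact zpow_le_zpow_right₀ (by norm_num) (by omega)

/-- same scale boxes intersecting are equal -/
lemma dBox_same_scale {j m m' : ℤ} (h : (dBox j m ∩ dBox j m').Nonempty) : m = m' := by
  obtain ⟨z, hz1, hz2⟩ := h
  have h2 : (0:ℝ) < 2 ^ j := zpow_pos (by norm_num) j
  obtain ⟨⟨a1, a2⟩, -⟩ := hz1
  obtain ⟨⟨b1, b2⟩, -⟩ := hz2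
  by_contra hne
  rcases lt_or_gt_of_ne hne with h' | h'
  · have : (m:ℝ) + 1 ≤ m' := by exact_mod_cast h'
    nlinarith
  · have : (m':ℝ) + 1 ≤ m := by exact_mod_cast h'
    nlinarith


lemma mem_dBox_iff {j m : ℤ} {z : ℂ} : z ∈ dBox j m ↔
    ((2:ℝ)^j * m ≤ z.re ∧ z.re < 2^j * (m+1)) ∧ (0 < z.im ∧ z.im < 2^j) := by
  constructor
  · rintro ⟨⟨h1, h2⟩, h3, h4⟩
    refine ⟨⟨h1, h2⟩, h3, ?_⟩
    have he : (2:ℝ)^j * ((m:ℝ)+1) - 2^j * m = 2^j := by ring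
    rwa [he] at h4
  · rintro ⟨⟨h1, h2⟩, h3, h4⟩
    refine ⟨⟨h1, h2⟩, h3, ?_⟩
    have he : (2:ℝ)^j * ((m:ℝ)+1) - 2^j * m = 2^j := by ring
    rwa [he]

lemma dBox_nonempty (j m : ℤ) : (dBox j m).Nonempty := by
  refine ⟨Complex.mk ((2:ℝ)^j * m) ((2:ℝ)^j / 2), ?_⟩
  have h2 : (0:ℝ) < 2 ^ j := zpow_pos (by norm_num) j
  rw [mem_dBox_iff]
  refine ⟨⟨le_rfl, ?_⟩, ?_, ?_⟩
  · show (2:ℝ)^j * m < _; nlinarith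
  · show (0:ℝ) < 2^j / 2; linarith
  · show (2:ℝ)^j / 2 < 2^j; linarith

lemma scale_le_of_subset {j m j' m' : ℤ} (h : dBox j m ⊆ dBox j' m') : j ≤ j' := by
  by_contra hlt
  push_neg at hlt
  have h2 : (0:ℝ) < 2 ^ j' := zpow_pos (by norm_num) j'
  have h2' : (2:ℝ) ^ j' < 2 ^ j := zpow_lt_zpow_right₀ (by norm_num) hlt
  have h3 : (0:ℝ) < 2 ^ j := zpow_pos (by norm_num) j
  have hz : (Complex.mk ((2:ℝ)^j * m) ((2:ℝ)^j')) ∈ dBox j m := by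
    rw [mem_dBox_iff]
    refine ⟨⟨le_rfl, ?_⟩, h2, h2'⟩
    show (2:ℝ)^j * m < _; nlinarith
  have := (mem_dBox_iff.mp (h hz)).2.2
  exact lt_irrefl _ this

lemma dBox_nested_or_disjoint {j m j' m' : ℤ} (hj : j ≤ j')
    (h : (dBox j m ∩ dBox j' m').Nonempty) : dBox j m ⊆ dBox j' m' := by
  set d : ℕ := (j' - j).toNat with hd
  have hjd : j + (d:ℤ) = j' := by omega
  have hanc : dBox j m ⊆ dBox j' (m / 2^d) := hjd ▸ dBox_subset_anc j m d
  obtain ⟨z, hz1, hz2⟩ := h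
  have heq : m / 2^d = m' := dBox_same_scale ⟨z, hanc hz1, hz2⟩
  rwa [heq] at hanc

lemma dBox_subset_cases {x y : ℤ × ℤ} (h : dBox x.1 x.2 ⊆ dBox y.1 y.2) :
    x = y ∨ x.1 < y.1 := by
  have hj : x.1 ≤ y.1 := scale_le_of_subset h
  rcases lt_or_eq_of_le hj with h' | h'
  · exact Or.inr h'
  · left
    have hz := (dBox_nonempty x.1 x.2).some_mem
    have h2 := h hz
    rw [← h'] at h2
    have : x.2 = y.2 := dBox_same_scale (j := x.1) ⟨_, hz, h2⟩
    exact Prod.ext h' this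

/-- Covering lemma: maximal boxes selected from a scale-bounded family. -/
lemma dyadic_covering (S : Set (ℤ × ℤ)) (J : ℤ) (hS : ∀ x ∈ S, x.1 ≤ J) :
    ∃ T ⊆ S, (⋃ x ∈ T, dBox x.1 x.2) = (⋃ x ∈ S, dBox x.1 x.2) ∧
      T.Pairwise (fun x y => Disjoint (dBox x.1 x.2) (dBox y.1 y.2)) := by
  classical
  set T : Set (ℤ × ℤ) := {x ∈ S | ∀ y ∈ S, dBox x.1 x.2 ⊆ dBox y.1 y.2 → y = x} with hT
  have hcov : ∀ n : ℕ, ∀ x ∈ S, (J - x.1).toNat ≤ n → ∃ y ∈ T, dBox x.1 x.2 ⊆ dBox y.1 y.2 := by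
    intro n
    induction n with
    | zero =>
      intro x hx hn
      refine ⟨x, ⟨hx, fun y hy hsub => ?_⟩, le_rfl⟩
      rcases dBox_subset_cases (x := x) (y := y) hsub with h' | h'
      · exact h'.symm
      · exact absurd (hS y hy) (by omega)
    | succ n ih =>
      intro x hx hn
      by_cases hmax : ∀ y ∈ S, dBox x.1 x.2 ⊆ dBox y.1 y.2 → y = x
      · exact ⟨x, ⟨hx, hmax⟩, Set.Subset.rfl⟩
      · push_neg at hmax
        obtain ⟨y, hy, hsub, hne⟩ := hmax
        rcases dBox_subset_cases (x := x) (y := y) hsub with h' | h'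
        · exact absurd h'.symm hne
        · obtain ⟨w, hw, hsub'⟩ := ih y hy (by omega)
          exact ⟨w, hw, hsub.trans hsub'⟩
  refine ⟨T, fun x hx => hx.1, ?_, ?_⟩
  · apply Set.Subset.antisymm
    · exact Set.iUnion₂_mono' (fun x hx => ⟨x, hx.1, le_rfl⟩)
    · refine Set.iUnion₂_subset (fun x hx => ?_)
      obtain ⟨y, hy, hsub⟩ := hcov (J - x.1).toNat x hx le_rfl
      exact hsub.trans (Set.subset_iUnion₂ (s := fun y _ => dBox y.1 y.2) y hy)
  · intro x hx y hy hne
    rw [Set.disjoint_iff_inter_eq_empty]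
    by_contra hint
    have hint' : (dBox x.1 x.2 ∩ dBox y.1 y.2).Nonempty := Set.nonempty_iff_ne_empty.mpr hint
    rcases le_total x.1 y.1 with h' | h'
    · exact hne (hx.2 y hy.1 (dBox_nested_or_disjoint h' hint')).symm
    · exact hne (hy.2 x hx.1 (dBox_nested_or_disjoint h' ⟨hint'.some, hint'.some_mem.2, hint'.some_mem.1⟩))


lemma tsum_rpow_le {ι : Type*} [Countable ι] (a : ι → ℝ≥0∞) {r : ℝ} (hr : 1 ≤ r) :
    ∑' i, a i ^ r ≤ (∑' i, a i) ^ r := by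
  set s := ∑' i, a i with hs
  have hrpos : (0:ℝ) < r := by linarith
  rcases eq_or_ne s ⊤ with hs' | hs'
  · rw [hs', ENNReal.top_rpow_of_pos hrpos]; exact le_top
  calc ∑' i, a i ^ r ≤ ∑' i, s ^ (r - 1) * a i := by
        apply ENNReal.tsum_le_tsum; intro i
        rcases eq_or_ne (a i) 0 with h0 | h0
        · simp [h0, ENNReal.zero_rpow_of_pos hrpos]
        · have hfin : a i ≠ ⊤ := ne_top_of_le_ne_top hs' (ENNReal.le_tsum i)
          calc a i ^ r = a i ^ (r-1) * a i ^ (1:ℝ) := by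
                rw [← ENNReal.rpow_add _ _ h0 hfin]; norm_num
          _ ≤ s ^ (r-1) * a i := by
                rw [ENNReal.rpow_one]
                exact mul_le_mul' (ENNReal.rpow_le_rpow (ENNReal.le_tsum i) (by linarith)) le_rfl
      _ = s ^ (r-1) * s := by rw [ENNReal.tsum_mul_left]
      _ ≤ s ^ r := by
          rcases eq_or_ne s 0 with h0 | h0
          · simp [h0]
          · calc s ^ (r-1) * s = s ^ (r-1) * s ^ (1:ℝ) := by rw [ENNReal.rpow_one]
              _ = s ^ r := by rw [← ENNReal.rpow_add _ _ h0 hs']; norm_num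
              _ ≤ s ^ r := le_rfl
            
lemma tsum_geom_tail {β : ℝ} (hβ : 0 < β) (K : ℤ) :
    ∑' k : ℤ, (if k ≤ K then (2:ℝ≥0∞) ^ ((k:ℝ)*β) else 0) ≤
      (2:ℝ≥0∞)^((K:ℝ)*β) * (1 - (2:ℝ≥0∞)^(-β))⁻¹ := by
  set g : ℤ → ℝ≥0∞ := fun k => if k ≤ K then (2:ℝ≥0∞) ^ ((k:ℝ)*β) else 0 with hg
  have hinj : Function.Injective (fun n : ℕ => K - (n:ℤ)) := by
    intro a b hab; simpa using hab
  have hsupp : Function.support g ⊆ Set.range (fun n : ℕ => K - (n:ℤ)) := by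
    intro k hk
    have hkK : k ≤ K := by
      by_contra h; simp [hg, h] at hk
    refine ⟨(K - k).toNat, ?_⟩
    show K - ((K - k).toNat : ℤ) = k
    omega
  rw [← Function.Injective.tsum_eq hinj hsupp]
  have heq : ∀ n : ℕ, g (K - n) = (2:ℝ≥0∞)^((K:ℝ)*β) * ((2:ℝ≥0∞)^(-β))^n := by
    intro n
    have h1 : (K - n : ℤ) ≤ K := by omega
    have : (((K - n : ℤ)):ℝ) * β = (K:ℝ)*β + (-β)*(n:ℕ) := by push_cast; ring
    rw [hg]
    simp only [h1, if_true]
    rw [this, ENNReal.rpow_add _ _ (by norm_num) (by norm_num), ← ENNReal.rpow_natCast ((2:ℝ≥0∞)^(-β)) n,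
      ← ENNReal.rpow_mul]
  calc ∑' n : ℕ, g (K - n) = ∑' n : ℕ, (2:ℝ≥0∞)^((K:ℝ)*β) * ((2:ℝ≥0∞)^(-β))^n := by
        exact tsum_congr heq
    _ = (2:ℝ≥0∞)^((K:ℝ)*β) * (1 - (2:ℝ≥0∞)^(-β))⁻¹ := by
        rw [ENNReal.tsum_mul_left, ENNReal.tsum_geometric]
    _ ≤ (2:ℝ≥0∞)^((K:ℝ)*β) * (1 - (2:ℝ≥0∞)^(-β))⁻¹ := le_rfl


def dMax (ω : ℂ → ℝ≥0∞) (g : ℂ → ℝ≥0∞) (z : ℂ) : ℝ≥0∞ :=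
  ⨆ (x : ℤ × ℤ) (_ : z ∈ dBox x.1 x.2),
    (wMass ω (dBox x.1 x.2))⁻¹ * ∫⁻ w in dBox x.1 x.2, g w * ω w

lemma dBox_subset_UHP (j m : ℤ) : dBox j m ⊆ UHP := fun z hz => hz.2.1

lemma lt_dMax_iff {ω g : ℂ → ℝ≥0∞} {z : ℂ} {t : ℝ≥0∞} :
    t < dMax ω g z ↔ ∃ x : ℤ × ℤ, z ∈ dBox x.1 x.2 ∧
      t < (wMass ω (dBox x.1 x.2))⁻¹ * ∫⁻ w in dBox x.1 x.2, g w * ω w := by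
  rw [dMax, lt_iSup_iff]
  constructor
  · rintro ⟨x, hx⟩
    rw [lt_iSup_iff] at hx
    obtain ⟨hz, hx⟩ := hx
    exact ⟨x, hz, hx⟩
  · rintro ⟨x, hz, hx⟩
    exact ⟨x, lt_iSup_iff.mpr ⟨hz, hx⟩⟩

lemma measurable_dMax {ω g : ℂ → ℝ≥0∞} : Measurable (dMax ω g) := by
  apply Measurable.iSup
  intro x
  have : (fun z => ⨆ (_ : z ∈ dBox x.1 x.2),
      (wMass ω (dBox x.1 x.2))⁻¹ * ∫⁻ w in dBox x.1 x.2, g w * ω w) =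
      (dBox x.1 x.2).indicator
        (fun _ => (wMass ω (dBox x.1 x.2))⁻¹ * ∫⁻ w in dBox x.1 x.2, g w * ω w) := by
    ext z
    by_cases hz : z ∈ dBox x.1 x.2 <;> simp [hz]
  rw [this]
  exact measurable_const.indicator (measurableSet_dBox _ _)

/-- basic facts when the average exceeds `t > 0` -/
lemma avg_facts {ω g : ℂ → ℝ≥0∞} (hω : Measurable ω) {x : ℤ × ℤ} {t : ℝ≥0∞}
    (ht : 0 < t)
    (h : t < (wMass ω (dBox x.1 x.2))⁻¹ * ∫⁻ w in dBox x.1 x.2, g w * ω w) :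
    wMass ω (dBox x.1 x.2) ≠ 0 ∧ wMass ω (dBox x.1 x.2) ≠ ⊤ ∧
      t * wMass ω (dBox x.1 x.2) ≤ ∫⁻ w in dBox x.1 x.2, g w * ω w := by
  set W := wMass ω (dBox x.1 x.2) with hW
  set R := ∫⁻ w in dBox x.1 x.2, g w * ω w with hR
  have hW0 : W ≠ 0 := by
    intro h0
    have hω0 : ω =ᵐ[volume.restrict (dBox x.1 x.2)] 0 :=
      (lintegral_eq_zero_iff hω).mp h0
    have hR0 : R = 0 := by
      rw [hR, ← lintegral_zero]
      apply lintegral_congr_ae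
      filter_upwards [hω0] with w hw
      simp [hw]
    rw [h0, hR0] at h
    simp at h
  have hWtop : W ≠ ⊤ := by
    intro htop
    rw [htop] at h
    simp at h
  refine ⟨hW0, hWtop, ?_⟩
  have : t * W < (W⁻¹ * R) * W := by
    rw [mul_comm t, mul_comm _ W]; exact ENNReal.mul_lt_mul_right hW0 hWtop h
  calc t * W ≤ (W⁻¹ * R) * W := le_of_lt this
    _ = R * (W⁻¹ * W) := by ring
    _ = R := by rw [ENNReal.inv_mul_cancel hW0 hWtop, mul_one]

lemma dBox_lower_lt_upper (j m : ℤ) : (2:ℝ)^j * (m:ℝ) < (2:ℝ)^j * ((m:ℝ)+1) := by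
  have h2 : (0:ℝ) < 2 ^ j := zpow_pos (by norm_num) j
  nlinarith

/-- The key level-set estimates, via the dyadic covering lemma. -/
lemma level_estimates (p q : ℝ) (hp : 1 < p) (hpq : p ≤ q)
    (ω : ℂ → ℝ≥0∞) (hω : Measurable ω)
    (μ : Measure ℂ) (C₀ : ℝ≥0∞)
    (hμ : ∀ a b : ℝ, a < b → μ (Box a b) ≤ C₀ * wMass ω (Box a b) ^ (q / p))
    (g : ℂ → ℝ≥0∞) (t : ℝ≥0∞) (ht : 0 < t) (ht' : t < ⊤) :
    μ {z | t < dMax ω g z} ≤ C₀ * (wMass ω {z | t < dMax ω g z}) ^ (q / p) ∧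
    t * wMass ω {z | t < dMax ω g z} ≤ ∫⁻ z in UHP, g z * ω z := by
  classical
  set W : Set ℂ → ℝ≥0∞ := wMass ω with hWdef
  set R : ℤ × ℤ → ℝ≥0∞ := fun x => ∫⁻ w in dBox x.1 x.2, g w * ω w with hRdef
  set S : Set (ℤ × ℤ) := {x | t < (W (dBox x.1 x.2))⁻¹ * R x} with hSdef
  set L : Set ℂ := {z | t < dMax ω g z} with hLdef
  have hLunion : L = ⋃ x ∈ S, dBox x.1 x.2 := by
    ext z
    simp only [hLdef, Set.mem_setOf_eq, Set.mem_iUnion]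
    rw [lt_dMax_iff]
    constructor
    · rintro ⟨x, hz, hx⟩; exact ⟨x, hx, hz⟩
    · rintro ⟨x, hx, hz⟩; exact ⟨x, hz, hx⟩
  have hLmeas : MeasurableSet L := by
    rw [hLdef]
    exact measurableSet_lt measurable_const measurable_dMax
  -- truncated families
  set SJ : ℤ → Set (ℤ × ℤ) := fun J => {x ∈ S | x.1 ≤ J} with hSJdef
  set EJ : ℤ → Set ℂ := fun J => ⋃ x ∈ SJ J, dBox x.1 x.2 with hEJdef
  have hEJmeas : ∀ J, MeasurableSet (EJ J) := by
    intro J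
    exact MeasurableSet.biUnion (Set.to_countable _) (fun x _ => measurableSet_dBox _ _)
  have hEJL : ∀ J, EJ J ⊆ L := by
    intro J
    rw [hLunion]
    exact Set.iUnion₂_mono' (fun x hx => ⟨x, hx.1, le_rfl⟩)
  have hLEJ : L = ⋃ J : ℤ, EJ J := by
    rw [hLunion]
    apply Set.Subset.antisymm
    · refine Set.iUnion₂_subset (fun x hx => ?_)
      refine Set.subset_iUnion_of_subset x.1 ?_
      exact Set.subset_iUnion₂ (s := fun y (_ : y ∈ SJ x.1) => dBox y.1 y.2) x ⟨hx, le_rfl⟩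
    · refine Set.iUnion_subset (fun J => ?_)
      exact hEJL J |>.trans_eq hLunion
  have hdirected : Directed (fun a b : Set ℂ => a ⊆ b) EJ := by
    intro J J'
    refine ⟨max J J', ?_, ?_⟩
    · exact Set.iUnion₂_mono' (fun x hx => ⟨x, ⟨hx.1, le_trans hx.2 (le_max_left J J')⟩, le_rfl⟩)
    · exact Set.iUnion₂_mono' (fun x hx => ⟨x, ⟨hx.1, le_trans hx.2 (le_max_right J J')⟩, le_rfl⟩)
  -- per-J estimates via covering
  have hperJ : ∀ J : ℤ, μ (EJ J) ≤ C₀ * (W L) ^ (q / p) ∧ t * W (EJ J) ≤ ∫⁻ z in UHP, g z * ω z := by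
    intro J
    obtain ⟨T, hTS, hTcov, hTdisj⟩ := dyadic_covering (SJ J) J (fun x hx => hx.2)
    have hTcount : T.Countable := Set.to_countable T
    have : Countable T := hTcount.to_subtype
    have hdisj' : Pairwise (Function.onFun Disjoint (fun x : T => dBox x.1.1 x.1.2)) := by
      intro a b hab
      exact hTdisj a.2 b.2 (Subtype.coe_injective.ne hab)
    have hmeas' : ∀ x : T, MeasurableSet (dBox x.1.1 x.1.2) := fun x => measurableSet_dBox _ _
    have hEJT : EJ J = ⋃ x : T, dBox x.1.1 x.1.2 := by
      rw [hEJdef]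
      simp only
      rw [← hTcov, Set.iUnion_coe_set]
    -- facts on each selected box
    have hfacts : ∀ x : T, W (dBox x.1.1 x.1.2) ≠ 0 ∧ W (dBox x.1.1 x.1.2) ≠ ⊤ ∧
        t * W (dBox x.1.1 x.1.2) ≤ R x.1 := by
      intro x
      have hxS : x.1 ∈ S := (hTS x.2).1
      exact avg_facts hω ht hxS
    -- W (EJ J) = ∑' W boxes
    have hWEJ : W (EJ J) = ∑' x : T, W (dBox x.1.1 x.1.2) := by
      rw [hEJT, hWdef, wMass]
      exact lintegral_iUnion hmeas' hdisj' ω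
    constructor
    · -- μ estimate
      have h1 : μ (EJ J) ≤ ∑' x : T, μ (dBox x.1.1 x.1.2) := by
        rw [hEJT]; exact measure_iUnion_le _
      have h2 : ∀ x : T, μ (dBox x.1.1 x.1.2) ≤ C₀ * (W (dBox x.1.1 x.1.2)) ^ (q/p) := by
        intro x
        exact hμ _ _ (dBox_lower_lt_upper x.1.1 x.1.2)
      calc μ (EJ J) ≤ ∑' x : T, C₀ * (W (dBox x.1.1 x.1.2)) ^ (q/p) :=
            h1.trans (ENNReal.tsum_le_tsum h2)
        _ = C₀ * ∑' x : T, (W (dBox x.1.1 x.1.2)) ^ (q/p) := ENNReal.tsum_mul_left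
        _ ≤ C₀ * (∑' x : T, W (dBox x.1.1 x.1.2)) ^ (q/p) := by
            apply mul_le_mul_right
            apply tsum_rpow_le
            exact (one_le_div (by linarith)).mpr hpq
        _ = C₀ * (W (EJ J)) ^ (q/p) := by rw [hWEJ]
        _ ≤ C₀ * (W L) ^ (q/p) := by
            apply mul_le_mul_right
            apply ENNReal.rpow_le_rpow _ (div_nonneg (by linarith) (by linarith))
            rw [hWdef, wMass]
            exact lintegral_mono_set (hEJL J)
    · -- W estimate
      calc t * W (EJ J) = ∑' x : T, t * W (dBox x.1.1 x.1.2) := by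
            rw [hWEJ, ENNReal.tsum_mul_left]
        _ ≤ ∑' x : T, R x.1 := ENNReal.tsum_le_tsum (fun x => (hfacts x).2.2)
        _ = ∫⁻ z in ⋃ x : T, dBox x.1.1 x.1.2, g z * ω z :=
            (lintegral_iUnion hmeas' hdisj' _).symm
        _ ≤ ∫⁻ z in UHP, g z * ω z := by
            apply lintegral_mono_set
            exact Set.iUnion_subset (fun x => dBox_subset_UHP _ _)
  -- pass to the limit
  have hμL : μ L = ⨆ J : ℤ, μ (EJ J) := by
    rw [hLEJ]; exact hdirected.measure_iUnion
  have hWL : W L = ⨆ J : ℤ, W (EJ J) := by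
    have : ∀ A : Set ℂ, MeasurableSet A → W A = (volume.withDensity ω) A := by
      intro A hA; rw [hWdef, wMass, withDensity_apply ω hA]
    rw [this L hLmeas, hLEJ]
    rw [hdirected.measure_iUnion]
    congr 1
    ext J
    rw [← this _ (hEJmeas J)]
  constructor
  · rw [hμL]
    exact iSup_le (fun J => (hperJ J).1)
  · rw [hWL, ENNReal.mul_iSup]
    exact iSup_le (fun J => (hperJ J).2)

/-- truncation inequality for the dyadic maximal function -/
lemma dMax_trunc {ω g : ℂ → ℝ≥0∞} (hg : Measurable g) (hω : Measurable ω) (c : ℝ≥0∞) (z : ℂ) :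
    dMax ω g z ≤ dMax ω (fun w => if c < g w then g w else 0) z + c := by
  set g₁ : ℂ → ℝ≥0∞ := fun w => if c < g w then g w else 0 with hg₁
  set g₂ : ℂ → ℝ≥0∞ := fun w => if c < g w then 0 else g w with hg₂
  have hg₁m : Measurable g₁ := by
    apply Measurable.ite _ hg measurable_const
    exact measurableSet_lt measurable_const hg
  have hsplit : ∀ w, g w = g₁ w + g₂ w := by
    intro w
    by_cases h : c < g w <;> simp [hg₁, hg₂, h]
  rw [dMax]
  apply iSup₂_le
  intro x hz
  set Q := dBox x.1 x.2 with hQ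
  set W := wMass ω Q with hW
  have hR : ∫⁻ w in Q, g w * ω w = (∫⁻ w in Q, g₁ w * ω w) + ∫⁻ w in Q, g₂ w * ω w := by
    rw [← lintegral_add_left (f := fun w => g₁ w * ω w) (hg₁m.mul hω)]
    apply lintegral_congr
    intro w
    rw [hsplit w]
    ring
  have hg₂le : ∫⁻ w in Q, g₂ w * ω w ≤ c * W := by
    rw [hW, wMass, ← lintegral_const_mul c hω]
    apply lintegral_mono
    intro w
    apply mul_le_mul' _ le_rfl
    by_cases h : c < g w <;> simp [hg₂, h]
    exact le_of_not_gt h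
  have havg₂ : W⁻¹ * ∫⁻ w in Q, g₂ w * ω w ≤ c := by
    calc W⁻¹ * ∫⁻ w in Q, g₂ w * ω w ≤ W⁻¹ * (c * W) := mul_le_mul' le_rfl hg₂le
      _ = c * (W⁻¹ * W) := by ring
      _ ≤ c * 1 := by
          apply mul_le_mul' le_rfl
          rcases eq_or_ne W 0 with h | h
          · simp [h]
          rcases eq_or_ne W ⊤ with h' | h'
          · simp [h']
          · rw [ENNReal.inv_mul_cancel h h']
      _ = c := mul_one c
  calc W⁻¹ * ∫⁻ w in Q, g w * ω w
      = (W⁻¹ * ∫⁻ w in Q, g₁ w * ω w) + W⁻¹ * ∫⁻ w in Q, g₂ w * ω w := by rw [hR, mul_add]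
    _ ≤ (W⁻¹ * ∫⁻ w in Q, g₁ w * ω w) + c := add_le_add le_rfl havg₂
    _ ≤ dMax ω g₁ z + c := by
        apply add_le_add _ le_rfl
        rw [dMax]
        exact le_iSup₂_of_le x hz le_rfl

lemma enn_two_zpow (l : ℤ) : (2:ℝ≥0∞) ^ ((l:ℝ)) = (((2:ℝ≥0) ^ l : ℝ≥0) : ℝ≥0∞) := by
  rw [ENNReal.coe_zpow (by norm_num), ENNReal.rpow_intCast]; norm_num

lemma key_sum (p q : ℝ) (hp : 1 < p) (hpq : p ≤ q)
    (ω : ℂ → ℝ≥0∞) (hω : Measurable ω)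
    (μ : Measure ℂ) (C₀ : ℝ≥0∞)
    (hμ : ∀ a b : ℝ, a < b → μ (Box a b) ≤ C₀ * wMass ω (Box a b) ^ (q / p))
    (F : ℂ → ℝ≥0∞) (hF : Measurable F) (hFfin : ∀ z, F z ≠ ⊤) :
    ∑' k : ℤ, (2:ℝ≥0∞)^((k:ℝ)*p) * wMass ω {z | (2:ℝ≥0∞)^((k:ℝ)) < dMax ω F z} ≤
      ((2:ℝ≥0∞)^p * (1 - (2:ℝ≥0∞)^(-(p-1)))⁻¹) * ∫⁻ z in UHP, F z ^ p * ω z := by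
  classical
  set τ : ℝ → ℝ≥0∞ := fun s => (2:ℝ≥0∞) ^ s with hτ
  have hτcoe : ∀ s, τ s = (((2:ℝ≥0) ^ s : ℝ≥0) : ℝ≥0∞) := by
    intro s
    rw [hτ]
    show (2:ℝ≥0∞) ^ s = _
    rw [show (2:ℝ≥0∞) = ((2:ℝ≥0):ℝ≥0∞) by norm_num,
      ENNReal.coe_rpow_of_ne_zero (by norm_num : (2:ℝ≥0) ≠ 0)]
  have hτz : ∀ l : ℤ, τ ((l:ℝ)) = (((2:ℝ≥0) ^ l : ℝ≥0) : ℝ≥0∞) := by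
    intro l
    rw [hτcoe]
    congr 1
    rw [← NNReal.rpow_intCast]
  have hτ0 : ∀ s, τ s ≠ 0 := by
    intro s; rw [hτcoe]
    simp only [ne_eq, ENNReal.coe_eq_zero]
    exact (NNReal.rpow_pos (by norm_num)).ne'
  have hτtop : ∀ s, τ s ≠ ⊤ := fun s => by rw [hτcoe]; exact ENNReal.coe_ne_top
  have hτadd : ∀ a b, τ (a + b) = τ a * τ b := fun a b =>
    ENNReal.rpow_add a b (by norm_num) (by norm_num)
  have hτmono : ∀ {a b : ℝ}, a ≤ b → τ a ≤ τ b := by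
    intro a b hab
    exact ENNReal.rpow_le_rpow_of_exponent_le (by norm_num) hab
  -- truncated functions
  set G : ℤ → ℂ → ℝ≥0∞ := fun k w => if τ ((k:ℝ) - 1) < F w then F w else 0 with hG
  have hGm : ∀ k, Measurable (G k) := by
    intro k
    apply Measurable.ite _ hF measurable_const
    exact measurableSet_lt measurable_const hF
  -- step 1: level set inclusion
  have hincl : ∀ k : ℤ, {z | τ (k:ℝ) < dMax ω F z} ⊆ {z | τ ((k:ℝ)-1) < dMax ω (G k) z} := by
    intro k z hz
    simp only [Set.mem_setOf_eq] at hz ⊢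
    by_contra hb
    push_neg at hb
    have h1 : dMax ω F z ≤ dMax ω (G k) z + τ ((k:ℝ)-1) := dMax_trunc hF hω _ z
    have h2 : dMax ω F z ≤ τ ((k:ℝ)-1) + τ ((k:ℝ)-1) := h1.trans (add_le_add hb le_rfl)
    have h3 : τ ((k:ℝ)-1) + τ ((k:ℝ)-1) = τ (k:ℝ) := by
      have e : 1 + ((k:ℝ) - 1) = (k:ℝ) := by ring
      calc τ ((k:ℝ)-1) + τ ((k:ℝ)-1) = 2 * τ ((k:ℝ)-1) := (two_mul _).symm
        _ = τ 1 * τ ((k:ℝ)-1) := by rw [hτ]; norm_num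
        _ = τ (1 + ((k:ℝ)-1)) := (hτadd _ _).symm
        _ = τ (k:ℝ) := by rw [e]
    rw [h3] at h2
    exact absurd hz (not_lt.mpr h2)
  -- step 2: weak type per k
  have hweak : ∀ k : ℤ, τ ((k:ℝ)-1) * wMass ω {z | τ ((k:ℝ)-1) < dMax ω (G k) z} ≤
      ∫⁻ z in UHP, G k z * ω z := by
    intro k
    exact (level_estimates p q hp hpq ω hω μ C₀ hμ (G k) (τ ((k:ℝ)-1))
      (pos_iff_ne_zero.mpr (hτ0 _))
      (lt_top_iff_ne_top.mpr (hτtop _))).2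
  -- per-term bound
  have hterm : ∀ k : ℤ, τ ((k:ℝ)*p) * wMass ω {z | τ (k:ℝ) < dMax ω F z} ≤
      2 * τ ((k:ℝ)*(p-1)) * ∫⁻ z in UHP, G k z * ω z := by
    intro k
    have hmono : wMass ω {z | τ (k:ℝ) < dMax ω F z} ≤
        wMass ω {z | τ ((k:ℝ)-1) < dMax ω (G k) z} := lintegral_mono_set (hincl k)
    calc τ ((k:ℝ)*p) * wMass ω {z | τ (k:ℝ) < dMax ω F z}
        ≤ τ ((k:ℝ)*p) * wMass ω {z | τ ((k:ℝ)-1) < dMax ω (G k) z} := mul_le_mul' le_rfl hmono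
      _ = (τ ((k:ℝ)*p - ((k:ℝ)-1))) * (τ ((k:ℝ)-1) * wMass ω {z | τ ((k:ℝ)-1) < dMax ω (G k) z}) := by
          rw [← mul_assoc, ← hτadd]
          congr 2
          ring
      _ ≤ τ ((k:ℝ)*p - ((k:ℝ)-1)) * ∫⁻ z in UHP, G k z * ω z := mul_le_mul' le_rfl (hweak k)
      _ = 2 * τ ((k:ℝ)*(p-1)) * ∫⁻ z in UHP, G k z * ω z := by
          congr 1
          have e : (k:ℝ)*p - ((k:ℝ)-1) = 1 + (k:ℝ)*(p-1) := by ring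
          rw [e, hτadd]
          congr 1
          rw [hτ]; norm_num
  -- pointwise geometric bound
  have hpoint : ∀ z : ℂ, (∑' k : ℤ, τ ((k:ℝ)*(p-1)) * G k z) ≤
      (2:ℝ≥0∞)^(p-1) * (1 - (2:ℝ≥0∞)^(-(p-1)))⁻¹ * F z ^ p := by
    intro z
    rcases eq_or_ne (F z) 0 with hz0 | hz0
    · have : ∀ k : ℤ, τ ((k:ℝ)*(p-1)) * G k z = 0 := by
        intro k
        have : G k z = 0 := by
          rw [hG]
          simp only [hz0]
          rw [if_neg (by simp)]
        rw [this, mul_zero]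
      rw [tsum_congr this]
      simp
    · -- 0 < F z < ∞
      set φ : ℝ≥0 := (F z).toNNReal with hφ
      have hφpos : 0 < φ := by
        rw [hφ]
        exact ENNReal.toNNReal_pos hz0 (hFfin z)
      have hφeq : F z = (φ : ℝ≥0∞) := (ENNReal.coe_toNNReal (hFfin z)).symm
      set K : ℤ := Int.log 2 φ + 1 with hK
      have hcond : ∀ k : ℤ, G k z ≠ 0 → k ≤ K := by
        intro k hk
        have hlt : τ ((k:ℝ)-1) < F z := by
          by_contra h
          rw [hG] at hk
          simp only [if_neg (by push_neg at h; exact not_lt.mpr h)] at hk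
          exact hk rfl
        have h1 : ((2:ℝ≥0)) ^ (k - 1 : ℤ) < φ := by
          have he : τ ((k:ℝ)-1) = (((2:ℝ≥0) ^ (k-1:ℤ) : ℝ≥0) : ℝ≥0∞) := by
            rw [show ((k:ℝ)-1) = (((k-1:ℤ)):ℝ) by push_cast; ring]
            exact hτz (k-1)
          rw [he, hφeq] at hlt
          exact_mod_cast hlt
        have h2 : φ < (2:ℝ≥0) ^ (Int.log 2 φ + 1) :=
          Int.lt_zpow_succ_log_self (by norm_num) φ
        have := h1.trans h2
        have := (zpow_lt_zpow_iff_right₀ (by norm_num : (1:ℝ≥0) < 2)).mp this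
        omega
      have hbound : ∀ k : ℤ, τ ((k:ℝ)*(p-1)) * G k z ≤
          (if k ≤ K then (2:ℝ≥0∞) ^ ((k:ℝ)*(p-1)) else 0) * F z := by
        intro k
        rcases eq_or_ne (G k z) 0 with h0 | h0
        · simp [h0]
        · rw [if_pos (hcond k h0)]
          apply mul_le_mul' le_rfl
          by_cases h : τ ((k:ℝ)-1) < F z <;> simp [hG, h]
      calc (∑' k : ℤ, τ ((k:ℝ)*(p-1)) * G k z)
          ≤ ∑' k : ℤ, (if k ≤ K then (2:ℝ≥0∞) ^ ((k:ℝ)*(p-1)) else 0) * F z :=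
            ENNReal.tsum_le_tsum hbound
        _ = (∑' k : ℤ, (if k ≤ K then (2:ℝ≥0∞) ^ ((k:ℝ)*(p-1)) else 0)) * F z := by
            rw [ENNReal.tsum_mul_right]
        _ ≤ ((2:ℝ≥0∞)^((K:ℝ)*(p-1)) * (1 - (2:ℝ≥0∞)^(-(p-1)))⁻¹) * F z := by
            apply mul_le_mul' _ le_rfl
            exact tsum_geom_tail (by linarith) K
        _ ≤ (2:ℝ≥0∞)^(p-1) * (1 - (2:ℝ≥0∞)^(-(p-1)))⁻¹ * F z ^ p := by
            -- 2^(K(p-1)) ≤ (2 F z)^(p-1)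
            have hτK : (2:ℝ≥0∞)^((K:ℝ)) ≤ 2 * F z := by
              have h1 : (2:ℝ≥0)^(Int.log 2 φ) ≤ φ := Int.zpow_log_le_self (by norm_num) hφpos
              have he : (2:ℝ≥0∞)^((K:ℝ)) = 2 * (((2:ℝ≥0)^(Int.log 2 φ) : ℝ≥0) : ℝ≥0∞) := by
                show τ ((K:ℝ)) = _
                rw [hτz K, hK]
                rw [zpow_add₀ (by norm_num : (2:ℝ≥0) ≠ 0)]
                push_cast
                ring_nf
                norm_num
              rw [he, hφeq]
              exact mul_le_mul' le_rfl (by exact_mod_cast h1)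
            have h2 : (2:ℝ≥0∞)^((K:ℝ)*(p-1)) ≤ (2 * F z) ^ (p-1) := by
              rw [ENNReal.rpow_mul]
              exact ENNReal.rpow_le_rpow hτK (by linarith)
            have h3 : (2 * F z) ^ (p-1) = (2:ℝ≥0∞)^(p-1) * F z ^ (p-1) :=
              ENNReal.mul_rpow_of_nonneg _ _ (by linarith)
            calc (2:ℝ≥0∞)^((K:ℝ)*(p-1)) * (1 - (2:ℝ≥0∞)^(-(p-1)))⁻¹ * F z
                ≤ (2:ℝ≥0∞)^(p-1) * F z ^ (p-1) * (1 - (2:ℝ≥0∞)^(-(p-1)))⁻¹ * F z := by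
                  apply mul_le_mul' (mul_le_mul' (h2.trans_eq h3) le_rfl) le_rfl
              _ = (2:ℝ≥0∞)^(p-1) * (1 - (2:ℝ≥0∞)^(-(p-1)))⁻¹ * (F z ^ (p-1) * F z ^ (1:ℝ)) := by
                  rw [ENNReal.rpow_one]; ring
              _ = (2:ℝ≥0∞)^(p-1) * (1 - (2:ℝ≥0∞)^(-(p-1)))⁻¹ * F z ^ p := by
                  rw [← ENNReal.rpow_add _ _ hz0 (hFfin z)]
                  norm_num
  -- assemble
  calc ∑' k : ℤ, τ ((k:ℝ)*p) * wMass ω {z | τ (k:ℝ) < dMax ω F z}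
      ≤ ∑' k : ℤ, 2 * τ ((k:ℝ)*(p-1)) * ∫⁻ z in UHP, G k z * ω z :=
        ENNReal.tsum_le_tsum hterm
    _ = 2 * ∑' k : ℤ, ∫⁻ z in UHP, τ ((k:ℝ)*(p-1)) * (G k z * ω z) := by
        rw [← ENNReal.tsum_mul_left]
        apply tsum_congr
        intro k
        rw [lintegral_const_mul (f := fun z => G k z * ω z) _ ((hGm k).mul hω), mul_assoc]
    _ = 2 * ∫⁻ z in UHP, ∑' k : ℤ, τ ((k:ℝ)*(p-1)) * (G k z * ω z) := by
        congr 1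
        exact (lintegral_tsum (fun k => ((measurable_const.mul ((hGm k).mul hω))).aemeasurable)).symm
    _ ≤ 2 * ∫⁻ z in UHP, ((2:ℝ≥0∞)^(p-1) * (1 - (2:ℝ≥0∞)^(-(p-1)))⁻¹) * (F z ^ p * ω z) := by
        apply mul_le_mul' le_rfl
        apply lintegral_mono
        intro z
        calc ∑' k : ℤ, τ ((k:ℝ)*(p-1)) * (G k z * ω z)
            = (∑' k : ℤ, τ ((k:ℝ)*(p-1)) * G k z) * ω z := by
              rw [← ENNReal.tsum_mul_right]
              apply tsum_congr
              intro k
              ring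
          _ ≤ ((2:ℝ≥0∞)^(p-1) * (1 - (2:ℝ≥0∞)^(-(p-1)))⁻¹ * F z ^ p) * ω z :=
              mul_le_mul' (hpoint z) le_rfl
          _ = ((2:ℝ≥0∞)^(p-1) * (1 - (2:ℝ≥0∞)^(-(p-1)))⁻¹) * (F z ^ p * ω z) := by ring
    _ = ((2:ℝ≥0∞)^p * (1 - (2:ℝ≥0∞)^(-(p-1)))⁻¹) * ∫⁻ z in UHP, F z ^ p * ω z := by
        rw [lintegral_const_mul (f := fun z => F z ^ p * ω z) _ ((hF.pow_const p).mul hω)]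
        have h2p : (2:ℝ≥0∞)^p = 2 * (2:ℝ≥0∞)^(p-1) := by
          rw [show (2:ℝ≥0∞) * (2:ℝ≥0∞)^(p-1) = (2:ℝ≥0∞)^(1:ℝ) * (2:ℝ≥0∞)^(p-1) by
            rw [ENNReal.rpow_one], ← ENNReal.rpow_add _ _ (by norm_num) (by norm_num)]
          congr 1
          ring
        rw [h2p]
        ring

/-- the pointwise dyadic layer-cake estimate -/
lemma layer_pointwise (h : ℂ → ℝ≥0∞) (q : ℝ) (hq : 0 < q) (z : ℂ) :
    h z ^ q ≤ (∑' k : ℤ, ({w | (2:ℝ≥0∞)^((k:ℝ)) ≤ h w ∧ h w < (2:ℝ≥0∞)^(((k+1:ℤ)):ℝ)}.indicator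
        (fun _ => (2:ℝ≥0∞)^((((k+1:ℤ)):ℝ)*q)) z)) +
      {w | h w = ⊤}.indicator (fun _ => ⊤) z := by
  rcases eq_or_ne (h z) ⊤ with htop | htop
  · have hmem : z ∈ {w | h w = ⊤} := htop
    rw [Set.indicator_of_mem hmem]
    simp
  rcases eq_or_ne (h z) 0 with h0 | h0
  · rw [h0, ENNReal.zero_rpow_of_pos hq]
    exact zero_le
  · set φ : ℝ≥0 := (h z).toNNReal with hφ
    have hφpos : 0 < φ := ENNReal.toNNReal_pos h0 htop
    have hφeq : h z = (φ : ℝ≥0∞) := (ENNReal.coe_toNNReal htop).symm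
    set k : ℤ := Int.log 2 φ with hk
    have hlow : (2:ℝ≥0∞)^((k:ℝ)) ≤ h z := by
      rw [enn_two_zpow, hφeq]
      exact_mod_cast Int.zpow_log_le_self (by norm_num) hφpos
    have hhigh : h z < (2:ℝ≥0∞)^(((k+1:ℤ)):ℝ) := by
      rw [enn_two_zpow, hφeq]
      exact_mod_cast Int.lt_zpow_succ_log_self (by norm_num) φ
    have hmem : z ∈ {w | (2:ℝ≥0∞)^((k:ℝ)) ≤ h w ∧ h w < (2:ℝ≥0∞)^(((k+1:ℤ)):ℝ)} := ⟨hlow, hhigh⟩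
    have hle : h z ^ q ≤ (2:ℝ≥0∞)^((((k+1:ℤ)):ℝ)*q) := by
      rw [ENNReal.rpow_mul]
      exact ENNReal.rpow_le_rpow hhigh.le hq.le
    calc h z ^ q ≤ ({w | (2:ℝ≥0∞)^((k:ℝ)) ≤ h w ∧ h w < (2:ℝ≥0∞)^(((k+1:ℤ)):ℝ)}.indicator
          (fun _ => (2:ℝ≥0∞)^((((k+1:ℤ)):ℝ)*q)) z) := by
          rw [Set.indicator_of_mem hmem]
          exact hle
      _ ≤ _ := le_add_right (ENNReal.le_tsum k)

/-- Lemma: for `1 < p ≤ q < ∞`, `ω ∈ B_p`, and `μ` a positive Borel measure with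
`μ(Q_I) ≤ C₀ (ω(Q_I))^{q/p}` for every bounded interval `I ⊂ ℝ`, the dyadic
maximal Carleson embedding `(∫_𝓗 (M_{d,ω} f)^q dμ)^{1/q} ≤ C ‖f‖_{p,ω}` holds. -/
theorem dyadic_maximal_carleson_embedding (p q : ℝ) (hp : 1 < p) (hpq : p ≤ q)
    (ω : ℂ → ℝ≥0∞) (hω : Measurable ω) (hBp : BBconst ω p < ⊤)
    (μ : Measure ℂ) (C₀ : ℝ≥0∞) (hC₀pos : 0 < C₀) (hC₀fin : C₀ < ⊤)
    (hμ : ∀ a b : ℝ, a < b → μ (Box a b) ≤ C₀ * wMass ω (Box a b) ^ (q / p)) :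
    ∃ C : ℝ≥0∞, 0 < C ∧ C < ⊤ ∧ ∀ f : ℂ → ℂ, Measurable f →
      (∫⁻ z in UHP, maxDW ω f z ^ q ∂μ) ^ (1 / q) ≤
        C * (∫⁻ z in UHP, (‖f z‖₊ : ℝ≥0∞) ^ p * ω z) ^ (1 / p) := by
  classical
  have hq1 : 1 < q := lt_of_lt_of_le hp hpq
  have hp0 : (0:ℝ) < p := by linarith
  have hq0 : (0:ℝ) < q := by linarith
  have hqp1 : 1 ≤ q / p := (one_le_div hp0).mpr hpq
  set τ : ℝ → ℝ≥0∞ := fun s => (2:ℝ≥0∞) ^ s with hτ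
  have hτ0 : ∀ s, τ s ≠ 0 := fun s => (ENNReal.rpow_pos (by norm_num) (by norm_num)).ne'
  have hτtop : ∀ s, τ s ≠ ⊤ := by
    intro s
    rw [hτ]
    simp [ENNReal.rpow_eq_top_iff]
  -- the constant
  set cg : ℝ≥0∞ := (1 - (2:ℝ≥0∞)^(-(p-1)))⁻¹ with hcg
  set Cp : ℝ≥0∞ := (2:ℝ≥0∞)^p * cg with hCp
  have hcg_pos : 0 < cg := ENNReal.inv_pos.mpr (by
    apply ne_top_of_le_ne_top (by norm_num : (1:ℝ≥0∞) ≠ ⊤)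
    exact tsub_le_self)
  have hcg_fin : cg < ⊤ := by
    rw [hcg, ENNReal.inv_lt_top]
    rw [tsub_pos_iff_lt]
    apply ENNReal.rpow_lt_one_of_one_lt_of_neg (by norm_num)
    linarith
  have hCp_pos : 0 < Cp := ENNReal.mul_pos (hτ0 p) hcg_pos.ne'
  have hCp_fin : Cp < ⊤ := ENNReal.mul_lt_top (lt_top_iff_ne_top.mpr (hτtop p)) hcg_fin
  set C : ℝ≥0∞ := (C₀ * τ (2*q)) ^ (1/q) * Cp ^ (1/p) with hC
  have hC_pos : 0 < C := by
    apply ENNReal.mul_pos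
    · exact (ENNReal.rpow_pos (ENNReal.mul_pos hC₀pos.ne' (hτ0 _)) (by
        exact ENNReal.mul_ne_top hC₀fin.ne (hτtop _))).ne'
    · exact (ENNReal.rpow_pos hCp_pos (hCp_fin.ne)).ne'
  have hC_fin : C < ⊤ := by
    apply ENNReal.mul_lt_top
    · exact ENNReal.rpow_lt_top_of_nonneg (by positivity) (ENNReal.mul_ne_top hC₀fin.ne (hτtop _))
    · exact ENNReal.rpow_lt_top_of_nonneg (by positivity) hCp_fin.ne
  refine ⟨C, hC_pos, hC_fin, ?_⟩
  intro f hf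
  set F : ℂ → ℝ≥0∞ := fun z => (‖f z‖₊ : ℝ≥0∞) with hFdef
  have hF : Measurable F := hf.enorm
  have hFfin : ∀ z, F z ≠ ⊤ := fun z => ENNReal.coe_ne_top
  set N : ℝ≥0∞ := ∫⁻ z in UHP, (‖f z‖₊ : ℝ≥0∞) ^ p * ω z with hN
  have hNF : (∫⁻ z in UHP, F z ^ p * ω z) = N := rfl
  set M : ℂ → ℝ≥0∞ := dMax ω F with hM
  have hMeq : ∀ z, maxDW ω f z = M z := by
    intro z
    rw [hM, maxDW, dMax, iSup_prod]
  rcases eq_or_ne N ⊤ with hNtop | hNtop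
  · rw [hNtop]
    rw [ENNReal.top_rpow_of_pos (by positivity), ENNReal.mul_top hC_pos.ne']
    exact le_top
  -- N finite
  have hkey := key_sum p q hp hpq ω hω μ C₀ hμ F hF hFfin
  rw [hNF] at hkey
  set u : ℤ → ℝ≥0∞ := fun k => wMass ω {z | τ ((k:ℝ)) < M z} with hu
  have hukey : ∑' k : ℤ, τ ((k:ℝ)*p) * u k ≤ Cp * N := hkey
  have hu_le : ∀ k : ℤ, τ ((k:ℝ)*p) * u k ≤ Cp * N :=
    fun k => (ENNReal.le_tsum k).trans hukey
  -- μ level estimates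
  have hμlevel : ∀ k : ℤ, μ {z | τ ((k:ℝ)) < M z} ≤ C₀ * (u k) ^ (q/p) := by
    intro k
    exact (level_estimates p q hp hpq ω hω μ C₀ hμ F (τ ((k:ℝ)))
      (pos_iff_ne_zero.mpr (hτ0 _)) (lt_top_iff_ne_top.mpr (hτtop _))).1
  -- a.e. finiteness w.r.t. μ
  have hMinf : μ {z | M z = ⊤} = 0 := by
    have hb : ∀ k : ℕ, μ {z | M z = ⊤} ≤ (C₀ * (Cp * N) ^ (q/p)) * ((2:ℝ≥0∞)^(-q))^k := by
      intro k
      have hsub : {z | M z = ⊤} ⊆ {z | τ (((k:ℤ):ℝ)) < M z} := by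
        intro z hz
        simp only [Set.mem_setOf_eq] at hz ⊢
        rw [hz]
        exact lt_top_iff_ne_top.mpr (hτtop _)
      have h1 : μ {z | M z = ⊤} ≤ C₀ * (u k) ^ (q/p) :=
        (measure_mono hsub).trans (hμlevel k)
      have h2 : u k ≤ τ (-(k:ℝ)*p) * (Cp * N) := by
        have := hu_le (k:ℤ)
        calc u k = (τ (((k:ℤ):ℝ)*p))⁻¹ * (τ (((k:ℤ):ℝ)*p) * u k) := by
              rw [← mul_assoc, ENNReal.inv_mul_cancel (hτ0 _) (hτtop _), one_mul]
          _ ≤ (τ (((k:ℤ):ℝ)*p))⁻¹ * (Cp * N) := mul_le_mul' le_rfl this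
          _ = τ (-(k:ℝ)*p) * (Cp * N) := by
              congr 1
              rw [hτ, ← ENNReal.rpow_neg]
              norm_num
      calc μ {z | M z = ⊤} ≤ C₀ * (u k) ^ (q/p) := h1
        _ ≤ C₀ * (τ (-(k:ℝ)*p) * (Cp * N)) ^ (q/p) :=
            mul_le_mul' le_rfl (ENNReal.rpow_le_rpow h2 (by positivity))
        _ = (C₀ * (Cp * N) ^ (q/p)) * (τ (-(k:ℝ)*p)) ^ (q/p) := by
            rw [ENNReal.mul_rpow_of_nonneg _ _ (by positivity)]
            ring
        _ = (C₀ * (Cp * N) ^ (q/p)) * ((2:ℝ≥0∞)^(-q))^k := by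
            congr 1
            rw [hτ, ← ENNReal.rpow_natCast ((2:ℝ≥0∞)^(-q)) k, ← ENNReal.rpow_mul,
              ← ENNReal.rpow_mul]
            congr 1
            field_simp
    have hfin : (C₀ * (Cp * N) ^ (q/p)) ≠ ⊤ := by
      apply ENNReal.mul_ne_top hC₀fin.ne
      exact (ENNReal.rpow_lt_top_of_nonneg (by positivity)
        (ENNReal.mul_ne_top hCp_fin.ne hNtop)).ne
    have htend : Filter.Tendsto (fun k : ℕ => (C₀ * (Cp * N) ^ (q/p)) * ((2:ℝ≥0∞)^(-q))^k)
        Filter.atTop (nhds 0) := by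
      rw [show (0:ℝ≥0∞) = (C₀ * (Cp * N) ^ (q/p)) * 0 by rw [mul_zero]]
      apply ENNReal.Tendsto.const_mul
      · exact ENNReal.tendsto_pow_atTop_nhds_zero_of_lt_one
          (ENNReal.rpow_lt_one_of_one_lt_of_neg (by norm_num) (by linarith))
      · exact Or.inr hfin
    exact le_antisymm (ge_of_tendsto' htend hb) zero_le
  -- layer cake estimate
  simp only [hMeq]
  set A : ℤ → Set ℂ := fun k => {w | τ ((k:ℝ)) ≤ M w ∧ M w < τ (((k+1:ℤ)):ℝ)} with hA
  have hAmeas : ∀ k, MeasurableSet (A k) := by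
    intro k
    have : A k = {w | τ ((k:ℝ)) ≤ M w} ∩ {w | M w < τ (((k+1:ℤ)):ℝ)} := rfl
    rw [this]
    exact (measurableSet_le measurable_const measurable_dMax).inter
      (measurableSet_lt measurable_dMax measurable_const)
  have hAinf_meas : MeasurableSet {w | M w = ⊤} := measurable_dMax (measurableSet_singleton ⊤)
  have hlayer : (∫⁻ z in UHP, M z ^ q ∂μ) ≤
      ∑' k : ℤ, τ ((((k+1:ℤ)):ℝ)*q) * μ (A k) := by
    calc ∫⁻ z in UHP, M z ^ q ∂μ ≤ ∫⁻ z, M z ^ q ∂μ := setLIntegral_le_lintegral _ _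
      _ ≤ ∫⁻ z, ((∑' k : ℤ, (A k).indicator (fun _ => τ ((((k+1:ℤ)):ℝ)*q)) z) +
            {w | M w = ⊤}.indicator (fun _ => ⊤) z) ∂μ :=
          lintegral_mono (fun z => layer_pointwise M q hq0 z)
      _ = (∫⁻ z, (∑' k : ℤ, (A k).indicator (fun _ => τ ((((k+1:ℤ)):ℝ)*q)) z) ∂μ) +
            ∫⁻ z, {w | M w = ⊤}.indicator (fun _ => ⊤) z ∂μ := by
          apply lintegral_add_left
          apply Measurable.ennreal_tsum
          intro k
          exact measurable_const.indicator (hAmeas k)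
      _ = (∑' k : ℤ, ∫⁻ z, (A k).indicator (fun _ => τ ((((k+1:ℤ)):ℝ)*q)) z ∂μ) +
            ⊤ * μ {w | M w = ⊤} := by
          rw [lintegral_tsum (fun k => (measurable_const.indicator (hAmeas k)).aemeasurable),
            lintegral_indicator hAinf_meas, setLIntegral_const]
      _ = (∑' k : ℤ, τ ((((k+1:ℤ)):ℝ)*q) * μ (A k)) + 0 := by
          rw [hMinf, mul_zero]
          congr 1
          apply tsum_congr
          intro k
          rw [lintegral_indicator (hAmeas k), setLIntegral_const]
      _ = ∑' k : ℤ, τ ((((k+1:ℤ)):ℝ)*q) * μ (A k) := add_zero _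
  -- term estimates
  have hterm : ∀ k : ℤ, τ ((((k+1:ℤ)):ℝ)*q) * μ (A k) ≤
      (C₀ * τ (2*q)) * (τ ((((k-1:ℤ)):ℝ)*p) * u (k-1)) ^ (q/p) := by
    intro k
    have hsub : A k ⊆ {z | τ ((((k-1:ℤ)):ℝ)) < M z} := by
      intro z hz
      have h1 : τ ((((k-1:ℤ)):ℝ)) < τ ((k:ℝ)) :=
        ENNReal.rpow_lt_rpow_of_exponent_lt (by norm_num) (by norm_num)
          (by push_cast; linarith)
      exact lt_of_lt_of_le h1 hz.1
    have h2 : μ (A k) ≤ C₀ * (u (k-1)) ^ (q/p) := (measure_mono hsub).trans (hμlevel (k-1))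
    calc τ ((((k+1:ℤ)):ℝ)*q) * μ (A k) ≤ τ ((((k+1:ℤ)):ℝ)*q) * (C₀ * (u (k-1)) ^ (q/p)) :=
          mul_le_mul' le_rfl h2
      _ = (C₀ * τ (2*q)) * (τ ((((k-1:ℤ)):ℝ)*p) * u (k-1)) ^ (q/p) := by
          rw [ENNReal.mul_rpow_of_nonneg _ _ (by positivity)]
          have hτq : (τ ((((k-1:ℤ)):ℝ)*p)) ^ (q/p) = τ ((((k-1:ℤ)):ℝ)*q) := by
            rw [hτ, ← ENNReal.rpow_mul]
            congr 1
            field_simp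
          rw [hτq]
          have hsplit : τ ((((k+1:ℤ)):ℝ)*q) = τ (2*q) * τ ((((k-1:ℤ)):ℝ)*q) := by
            rw [hτ, ← ENNReal.rpow_add _ _ (by norm_num) (by norm_num)]
            congr 1
            push_cast
            ring
          rw [hsplit]
          ring
  -- sum up
  have hsum : (∑' k : ℤ, τ ((((k+1:ℤ)):ℝ)*q) * μ (A k)) ≤
      (C₀ * τ (2*q)) * (Cp * N) ^ (q/p) := by
    calc (∑' k : ℤ, τ ((((k+1:ℤ)):ℝ)*q) * μ (A k))
        ≤ ∑' k : ℤ, (C₀ * τ (2*q)) * (τ ((((k-1:ℤ)):ℝ)*p) * u (k-1)) ^ (q/p) :=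
          ENNReal.tsum_le_tsum hterm
      _ = (C₀ * τ (2*q)) * ∑' k : ℤ, (τ ((((k-1:ℤ)):ℝ)*p) * u (k-1)) ^ (q/p) :=
          ENNReal.tsum_mul_left
      _ = (C₀ * τ (2*q)) * ∑' j : ℤ, (τ ((j:ℝ)*p) * u j) ^ (q/p) := by
          congr 1
          exact (Equiv.subRight (1:ℤ)).tsum_eq (fun j => (τ ((j:ℝ)*p) * u j) ^ (q/p))
      _ ≤ (C₀ * τ (2*q)) * (∑' j : ℤ, τ ((j:ℝ)*p) * u j) ^ (q/p) :=
          mul_le_mul' le_rfl (tsum_rpow_le _ hqp1)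
      _ ≤ (C₀ * τ (2*q)) * (Cp * N) ^ (q/p) :=
          mul_le_mul' le_rfl (ENNReal.rpow_le_rpow hukey (by positivity))
  -- conclude
  calc (∫⁻ z in UHP, M z ^ q ∂μ) ^ (1/q)
      ≤ ((C₀ * τ (2*q)) * (Cp * N) ^ (q/p)) ^ (1/q) :=
        ENNReal.rpow_le_rpow (hlayer.trans hsum) (by positivity)
    _ = (C₀ * τ (2*q)) ^ (1/q) * ((Cp * N) ^ (q/p)) ^ (1/q) :=
        ENNReal.mul_rpow_of_nonneg _ _ (by positivity)
    _ = (C₀ * τ (2*q)) ^ (1/q) * (Cp * N) ^ (1/p) := by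
        congr 1
        rw [← ENNReal.rpow_mul]
        congr 1
        field_simp
    _ = (C₀ * τ (2*q)) ^ (1/q) * (Cp ^ (1/p) * N ^ (1/p)) := by
        congr 1
        exact ENNReal.mul_rpow_of_nonneg _ _ (by positivity)
    _ = C * N ^ (1/p) := by rw [hC]; ring
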